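/- Let P be a shortest solution path (a minimum-length (s,t)-path among those of length at least dist_G(s,t)+2k, with k ≥ 1), let p be the smallest index such that layer L_p contains more than one vertex of P, and let u, v be the first and second vertices of P in L_p. Then the subpath of P from u to v has length strictly greater than k. -/

import Mathlib

variable {V : Type*}

/-- `l` is a (nonempty) directed walk in the digraph `G`. -/
def IsWalk (G : V → V → Prop) : List V → Prop
  | [] => False
  | [_] => True
  | a :: b :: l => G a b ∧ IsWalk G (b :: l)

/-- `l` is a simple directed path in `G`. -/
def IsPath (G : V → V → Prop) (l : List V) : Prop := IsWalk G l ∧ l.Nodup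

/-- `l` is a walk from `s` to `t` in `G`. -/
def IsWalkFrom (G : V → V → Prop) (s t : V) (l : List V) : Prop :=
  IsWalk G l ∧ l.head? = some s ∧ l.getLast? = some t

/-- `l` is a simple path from `s` to `t` in `G`. -/
def IsPathFrom (G : V → V → Prop) (s t : V) (l : List V) : Prop :=
  IsPath G l ∧ l.head? = some s ∧ l.getLast? = some t

/-- The length (number of edges) of a path given as a vertex list. -/
def pathLen (l : List V) : ℕ := l.length - 1

/-- Directed shortest-path distance (`⊤` if unreachable). -/
noncomputable def ddist (G : V → V → Prop) (s t : V) : ℕ∞ :=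
  sInf {n : ℕ∞ | ∃ l, IsPathFrom G s t l ∧ (pathLen l : ℕ∞) = n}

section Aux
variable {G : V → V → Prop}


lemma isWalk_ne_nil {l : List V} (h : IsWalk G l) : l ≠ [] := by
  cases l with
  | nil => exact absurd h (by simp [IsWalk])
  | cons a l => simp

lemma isWalk_tail {a : V} {l : List V} (h : IsWalk G (a :: l)) (hl : l ≠ []) : IsWalk G l := by
  cases l with
  | nil => simp at hl
  | cons b l => exact h.2

lemma isWalk_drop {l : List V} (h : IsWalk G l) : ∀ {n : ℕ}, n < l.length → IsWalk G (l.drop n) := by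
  induction l with
  | nil => intro n hn; simp at hn
  | cons a l ih =>
    intro n hn
    cases n with
    | zero => exact h
    | succ n =>
      simp only [List.drop_succ_cons]
      have hl : l ≠ [] := by
        intro hnil; subst hnil; simp at hn
      exact ih (isWalk_tail h hl) (by simpa using hn)

lemma isWalk_rel {l : List V} (h : IsWalk G l) (d : V) :
    ∀ {i : ℕ}, i + 1 < l.length → G (l.getD i d) (l.getD (i+1) d) := by
  induction l with
  | nil => intro i hi; simp at hi
  | cons a l ih =>
    intro i hi
    cases l with
    | nil => simp at hi
    | cons b l =>
      cases i with
      | zero => simpa using h.1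
      | succ i =>
        have := ih h.2 (i := i) (by simpa using hi)
        simpa using this

lemma isWalk_take {l : List V} (h : IsWalk G l) : ∀ {n : ℕ}, 0 < n → IsWalk G (l.take n) := by
  induction l with
  | nil => intro n hn; exact absurd h (by simp [IsWalk])
  | cons a l ih =>
    intro n hn
    cases n with
    | zero => omega
    | succ n =>
      cases l with
      | nil => simp [IsWalk]
      | cons b l =>
        cases n with
        | zero => simp [IsWalk]
        | succ n =>
          exact ⟨h.1, ih h.2 (n := n+1) (by omega)⟩

lemma isWalk_append {l₁ l₂ : List V} {x : V} (h₁ : IsWalk G (l₁ ++ [x]))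
    (h₂ : IsWalk G (x :: l₂)) : IsWalk G (l₁ ++ x :: l₂) := by
  induction l₁ with
  | nil => simpa using h₂
  | cons a l₁ ih =>
    cases l₁ with
    | nil =>
      exact ⟨h₁.1, h₂⟩
    | cons b l₁ =>
      exact ⟨h₁.1, ih h₁.2⟩

lemma isWalk_singleton (a : V) : IsWalk G [a] := by show True; trivial

lemma isWalk_pair {a b : V} (h : G a b) : IsWalk G [a, b] := by
  show G a b ∧ IsWalk G [b]; exact ⟨h, isWalk_singleton b⟩

lemma ddist_le_pathLen {s w : V} {l : List V} (h : IsPathFrom G s w l) :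
    ddist G s w ≤ (pathLen l : ℕ∞) :=
  sInf_le ⟨l, h, rfl⟩

lemma ddist_self (s : V) : ddist G s s = 0 := by
  have h : IsPathFrom G s s [s] := by
    exact ⟨⟨isWalk_singleton s, by simp⟩, by simp, by simp⟩
  have := ddist_le_pathLen h
  simpa [pathLen] using this

lemma ddist_exists {s w : V} (h : ddist G s w ≠ ⊤) :
    ∃ l, IsPathFrom G s w l ∧ (pathLen l : ℕ∞) = ddist G s w := by
  have hne : {n : ℕ | ∃ l, IsPathFrom G s w l ∧ pathLen l = n}.Nonempty := by
    by_contra hemp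
    apply h
    rw [ddist]
    refine (congrArg sInf (?_ : _ = (∅ : Set ℕ∞))).trans sInf_empty
    ext n
    simp only [Set.mem_setOf_eq, Set.mem_empty_iff_false, iff_false]
    rintro ⟨l, hl, rfl⟩
    exact hemp ⟨pathLen l, l, hl, rfl⟩
  obtain ⟨l, hl, hlen⟩ := Nat.sInf_mem hne
  refine ⟨l, hl, ?_⟩
  rw [hlen]
  apply le_antisymm
  · apply le_sInf
    rintro b ⟨m, hm, rfl⟩
    have hmem : pathLen m ∈ {n : ℕ | ∃ l, IsPathFrom G s w l ∧ pathLen l = n} := ⟨m, hm, rfl⟩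
    exact_mod_cast Nat.sInf_le hmem
  · exact sInf_le ⟨l, hl, by rw [hlen]⟩

lemma getD_mem {l : List V} {i : ℕ} (hi : i < l.length) (d : V) : l.getD i d ∈ l := by
  rw [List.getD_eq_getElem l d hi]
  exact List.getElem_mem hi

lemma ddist_step {s a b : V} (hab : G a b) : ddist G s b ≤ ddist G s a + 1 := by
  rcases eq_or_ne (ddist G s a) ⊤ with h | h
  · simp [h]
  obtain ⟨l, ⟨⟨hw, hnd⟩, hh, hl⟩, hlen⟩ := ddist_exists h
  by_cases hb : b ∈ l
  · obtain ⟨l₁, l₂, rfl⟩ := List.append_of_mem hb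
    have htake : (l₁ ++ b :: l₂).take (l₁.length + 1) = l₁ ++ [b] := by
      simp [List.take_append, List.take_cons]
    have hwalk : IsWalk G (l₁ ++ [b]) := by
      rw [← htake]; exact isWalk_take hw (by omega)
    have hpath : IsPathFrom G s b (l₁ ++ [b]) := by
      refine ⟨⟨hwalk, ?_⟩, ?_, by simp⟩
      · have := hnd
        rw [← htake]
        exact (List.take_sublist _ _).nodup hnd
      · cases l₁ with
        | nil => simpa using hh
        | cons c l₁ => simpa using hh
    have h1 := ddist_le_pathLen hpath
    have h2 : pathLen (l₁ ++ [b]) ≤ pathLen (l₁ ++ b :: l₂) := by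
      simp [pathLen]
    calc ddist G s b ≤ (pathLen (l₁ ++ [b]) : ℕ∞) := h1
      _ ≤ (pathLen (l₁ ++ b :: l₂) : ℕ∞) := by exact_mod_cast h2
      _ = ddist G s a := hlen
      _ ≤ ddist G s a + 1 := le_self_add
  · -- b ∉ l : extend
    have hlne : l ≠ [] := isWalk_ne_nil hw
    have hlast : l.getLast hlne = a := by
      rwa [List.getLast?_eq_getLast hlne, Option.some_inj] at hl
    have hsplit : l.dropLast ++ [a] = l := by
      rw [← hlast]; exact List.dropLast_append_getLast hlne
    have hwalk : IsWalk G (l ++ [b]) := by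
      have : IsWalk G (l.dropLast ++ a :: [b]) := by
        exact isWalk_append (l₂ := [b]) (by rwa [hsplit]) (isWalk_pair hab)
      rwa [show l.dropLast ++ a :: [b] = (l.dropLast ++ [a]) ++ [b] by simp, hsplit] at this
    have hpath : IsPathFrom G s b (l ++ [b]) := by
      refine ⟨⟨hwalk, ?_⟩, ?_, by simp⟩
      · simp only [List.nodup_append, List.nodup_cons]
        exact ⟨hnd, by simp, by simpa using fun a (ha : a ∈ l) (hab : a = b) => hb (hab ▸ ha)⟩
      · cases l with
        | nil => simp at hlne
        | cons c l => simpa using hh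
    have h1 := ddist_le_pathLen hpath
    have h2 : pathLen (l ++ [b]) = pathLen l + 1 := by
      have h0 : 0 < l.length := List.length_pos_iff.2 hlne
      simp only [pathLen, List.length_append, List.length_singleton]
      omega
    rw [h2] at h1
    calc ddist G s b ≤ ((pathLen l + 1 : ℕ) : ℕ∞) := h1
      _ = ddist G s a + 1 := by rw [Nat.cast_add, hlen, Nat.cast_one]

lemma ddist_index {s : V} {l : List V} (hw : IsWalk G l) (hh : l.head? = some s) :
    ∀ i < l.length, ddist G s (l.getD i s) ≤ (i : ℕ∞) := by
  intro i
  induction i with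
  | zero =>
    intro hi
    have : l.getD 0 s = s := by
      cases l with
      | nil => simp at hi
      | cons a l =>
        simp only [List.getD_cons_zero]
        simpa using hh
    rw [this, ddist_self]
    simp
  | succ i ih =>
    intro hi
    have h1 := ih (by omega)
    have h2 := isWalk_rel hw s (i := i) hi
    calc ddist G s (l.getD (i+1) s) ≤ ddist G s (l.getD i s) + 1 := ddist_step h2
      _ ≤ (i : ℕ∞) + 1 := by exact_mod_cast add_le_add h1 (le_refl (1 : ℕ∞))
      _ = ((i+1 : ℕ) : ℕ∞) := by push_cast; ring



end Aux

theorem stmt_4 (G : V → V → Prop) (s t : V) (k p : ℕ) (P : List V) (iu iv : ℕ)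
    (hreach : ∀ w : V, ∃ l, IsPathFrom G s w l)
    (hk : 1 ≤ k)
    (hgap : ∀ Q, IsPathFrom G s t Q → ddist G s t + (k : ℕ∞) ≤ (pathLen Q : ℕ∞) →
      ddist G s t + ((2*k : ℕ) : ℕ∞) ≤ (pathLen Q : ℕ∞))
    (hP : IsPathFrom G s t P)
    (hPsol : ddist G s t + ((2*k : ℕ) : ℕ∞) ≤ (pathLen P : ℕ∞))
    (hmin : ∀ Q, IsPathFrom G s t Q → ddist G s t + ((2*k : ℕ) : ℕ∞) ≤ (pathLen Q : ℕ∞) →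
      pathLen P ≤ pathLen Q)
    (hiu : iu < iv) (hiv : iv < P.length)
    (hu : ddist G s (P.getD iu s) = (p : ℕ∞)) (hv : ddist G s (P.getD iv s) = (p : ℕ∞))
    (hfirst : ∀ m < iu, ddist G s (P.getD m s) ≠ (p : ℕ∞))
    (hsecond : ∀ m, iu < m → m < iv → ddist G s (P.getD m s) ≠ (p : ℕ∞))
    (hpmin : ∀ q : ℕ, q < p →
      ¬ ∃ a ∈ P, ∃ b ∈ P, a ≠ b ∧ ddist G s a = (q : ℕ∞) ∧ ddist G s b = (q : ℕ∞)) :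
    k < iv - iu := by
  obtain ⟨⟨hPw, hPnd⟩, hPh, hPl⟩ := hP
  have hPne : P ≠ [] := isWalk_ne_nil hPw
  have hn : 1 ≤ P.length := List.length_pos_iff.2 hPne
  -- finiteness of distances
  have hfin : ∀ w, ddist G s w ≠ ⊤ := by
    intro w
    obtain ⟨l, hl⟩ := hreach w
    exact ((ddist_le_pathLen hl).trans_lt (ENat.coe_lt_top _)).ne
  set g : ℕ → ℕ := fun j => (ddist G s (P.getD j s)).toNat with hgdef
  have hg : ∀ j, (g j : ℕ∞) = ddist G s (P.getD j s) := fun j => ENat.coe_toNat (hfin _)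
  have hu' : g iu = p := by
    have := hu; rw [← hg] at this; exact_mod_cast this
  have hv' : g iv = p := by
    have := hv; rw [← hg] at this; exact_mod_cast this
  have hfirst' : ∀ m < iu, g m ≠ p := by
    intro m hm hc
    exact hfirst m hm (by rw [← hg, hc])
  -- injectivity of layers below p
  have hinj : ∀ j₁ j₂, j₁ < P.length → j₂ < P.length → j₁ ≠ j₂ → g j₁ < p → g j₁ ≠ g j₂ := by
    intro j₁ j₂ h₁ h₂ hne hlt heq
    apply hpmin (g j₁) hlt
    refine ⟨P.getD j₁ s, getD_mem h₁ s, P.getD j₂ s, getD_mem h₂ s, ?_, (hg j₁).symm, ?_⟩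
    · rw [List.getD_eq_getElem P s h₁, List.getD_eq_getElem P s h₂]
      intro hc
      exact hne ((hPnd.getElem_inj_iff).1 hc)
    · rw [← hg, heq]
  have hgle : ∀ j, j < P.length → g j ≤ j := by
    intro j hj
    have := ddist_index hPw hPh j hj
    rw [← hg] at this
    exact_mod_cast this
  have hstep : ∀ j, j + 1 < P.length → g (j+1) ≤ g j + 1 := by
    intro j hj
    have := ddist_step (s := s) (isWalk_rel hPw s hj)
    rw [← hg, ← hg] at this
    exact_mod_cast this
  have hg0 : g 0 = 0 := by
    have h0 : P.getD 0 s = s := by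
      cases P with
      | nil => simp at hn
      | cons a l =>
        simp only [List.getD_cons_zero]
        simpa using hPh
    show (ddist G s (P.getD 0 s)).toNat = 0
    rw [h0, ddist_self]
    rfl
  have claimA : ∀ j < iu, g j < p := by
    intro j
    induction j with
    | zero =>
      intro h0
      have hp0 : g 0 ≠ p := hfirst' 0 h0
      omega
    | succ j ih =>
      intro hj
      have h1 : g j < p := ih (by omega)
      have h2 : g (j+1) ≤ g j + 1 := hstep j (by omega)
      have h3 : g (j+1) ≠ p := hfirst' (j+1) hj
      omega
  have hpu : p ≤ iu := by
    have := hgle iu (by omega)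
    omega
  have hup : iu ≤ p := by
    have hF : Function.Injective (fun j : Fin iu => (⟨g j, claimA j j.2⟩ : Fin p)) := by
      intro j₁ j₂ hj
      simp only [Fin.mk.injEq] at hj
      by_contra hne
      exact hinj j₁ j₂ (by omega) (by omega) (fun hc => hne (Fin.ext hc))
        (claimA j₁ j₁.2) hj
    simpa using Fintype.card_le_of_injective _ hF
  have hip : iu = p := le_antisymm hup hpu
  have hsurj : ∀ q < p, ∃ j < iu, g j = q := by
    intro q hq
    have hF : Function.Injective (fun j : Fin p => (⟨g j, claimA j (by rw [hip]; exact j.2)⟩ : Fin p)) := by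
      intro j₁ j₂ hj
      simp only [Fin.mk.injEq] at hj
      by_contra hne
      exact hinj j₁ j₂ (by have := j₁.2; omega) (by have := j₂.2; omega)
        (fun hc => hne (Fin.ext hc)) (claimA j₁ (by rw [hip]; exact j₁.2)) hj
    obtain ⟨j, hj⟩ := Finite.injective_iff_surjective.1 hF ⟨q, hq⟩
    refine ⟨j, by rw [hip]; exact j.2, ?_⟩
    simpa [Fin.ext_iff] using hj
  have claimC : ∀ m, iv < m → m < P.length → p ≤ g m := by
    intro m h1 h2
    by_contra h3
    push_neg at h3
    obtain ⟨j, hj, hjq⟩ := hsurj (g m) h3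
    exact hinj j m (by omega) h2 (by omega) (by omega) (by omega)
  -- shortest path to v
  obtain ⟨S, ⟨⟨hSw, hSnd⟩, hSh, hSl⟩, hSlen⟩ := ddist_exists (hfin (P.getD iv s))
  rw [hv] at hSlen
  have hSplen : pathLen S = p := by exact_mod_cast hSlen
  have hSne : S ≠ [] := isWalk_ne_nil hSw
  have hSlength : S.length = p + 1 := by
    have : 1 ≤ S.length := List.length_pos_iff.2 hSne
    simp only [pathLen] at hSplen
    omega
  have hSidx : ∀ i < S.length, ddist G s (S.getD i s) ≤ (i : ℕ∞) := ddist_index hSw hSh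
  have hSlast : S.getLast hSne = P.getD iv s := by
    rw [List.getLast?_eq_getLast hSne, Option.some_inj] at hSl
    exact hSl
  set D := P.drop (iv+1) with hDdef
  have hDlen : D.length = P.length - (iv+1) := by simp [hDdef]
  have hvD : P.drop iv = P.getD iv s :: D := by
    rw [List.getD_eq_getElem P s hiv]
    exact List.drop_eq_getElem_cons hiv
  have hDidx : ∀ x ∈ D, ∃ m, iv < m ∧ m < P.length ∧ P.getD m s = x := by
    intro x hx
    rw [List.mem_iff_getElem] at hx
    obtain ⟨j, hj, rfl⟩ := hx
    refine ⟨iv + 1 + j, by omega, by rw [hDlen] at hj; omega, ?_⟩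
    rw [List.getD_eq_getElem P s (by rw [hDlen] at hj; omega)]
    simp only [hDdef]
    exact List.getElem_drop.symm
  -- the walk Q = S ++ D
  have hQw : IsWalk G (S ++ D) := by
    have h1 : IsWalk G (S.dropLast ++ [P.getD iv s]) := by
      rw [← hSlast, List.dropLast_append_getLast hSne]
      exact hSw
    have h2 : IsWalk G (P.getD iv s :: D) := by
      rw [← hvD]
      exact isWalk_drop hPw hiv
    have h3 := isWalk_append h1 h2
    have h4 : S.dropLast ++ P.getD iv s :: D = S ++ D := by
      rw [show S.dropLast ++ P.getD iv s :: D = (S.dropLast ++ [P.getD iv s]) ++ D by simp,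
        ← hSlast, List.dropLast_append_getLast hSne]
    rwa [h4] at h3
  have hPdisj : (P.take (iv+1)).Disjoint D := by
    have := hPnd
    rw [← List.take_append_drop (iv+1) P, ← hDdef] at this
    exact fun a ha hb => (List.nodup_append.1 this).2.2 a ha a hb rfl
  have hSmem : ∀ x ∈ S, (∃ i < p, S.getD i s = x) ∨ x = P.getD iv s := by
    intro x hx
    rw [List.mem_iff_getElem] at hx
    obtain ⟨i, hi, rfl⟩ := hx
    by_cases hip' : i < p
    · left; exact ⟨i, hip', List.getD_eq_getElem S s hi⟩
    · right
      have hieq : i = p := by rw [hSlength] at hi; omega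
      subst hieq
      have h5 : S.getLast hSne = S[i]'hi := by
        rw [List.getLast_eq_getElem hSne]
        simp [hSlength]
      rw [← hSlast, h5]
  have hdisj : S.Disjoint D := by
    intro x hxS hxD
    obtain ⟨m, hm1, hm2, rfl⟩ := hDidx x hxD
    rcases hSmem _ hxS with ⟨i, hi, hieq⟩ | heq
    · have h1 : ddist G s (P.getD m s) ≤ (i : ℕ∞) := by
        rw [← hieq]; exact hSidx i (by omega)
      have h2 : p ≤ g m := claimC m hm1 hm2
      rw [← hg] at h1
      have h3 : g m ≤ i := by exact_mod_cast h1
      omega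
    · rw [List.getD_eq_getElem P s hm2, List.getD_eq_getElem P s hiv] at heq
      have := (hPnd.getElem_inj_iff).1 heq
      omega
  have hQnd : (S ++ D).Nodup :=
    List.Nodup.append hSnd ((List.drop_sublist _ _).nodup hPnd) hdisj
  have hQh : (S ++ D).head? = some s := by
    cases S with
    | nil => exact absurd rfl hSne
    | cons a S' => simpa using hSh
  have hPt : P.getD (P.length - 1) s = t := by
    have h1 := List.getLast?_eq_getLast hPne
    rw [hPl] at h1
    rw [List.getD_eq_getElem P s (by omega), ← List.getLast_eq_getElem hPne]
    exact (Option.some_inj.1 h1).symm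
  have hQl : (S ++ D).getLast? = some t := by
    by_cases hD : D = []
    · rw [hD, List.append_nil, hSl]
      have hivn : iv = P.length - 1 := by
        have h0 : D.length = 0 := by rw [hD]; rfl
        rw [hDlen] at h0; omega
      rw [hivn, hPt]
    · have h2 : P.getLast? = D.getLast? := by
        conv_lhs => rw [← List.take_append_drop (iv+1) P]
        exact List.getLast?_append_of_ne_nil _ hD
      rw [List.getLast?_append_of_ne_nil S hD, ← h2]
      exact hPl
  have hQlen : pathLen (S ++ D) = p + (P.length - 1 - iv) := by
    simp only [pathLen, List.length_append, hSlength, hDlen]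
    omega
  have hQpath : IsPathFrom G s t (S ++ D) := ⟨⟨hQw, hQnd⟩, hQh, hQl⟩
  have hdt := hfin t
  set d := (ddist G s t).toNat with hddef
  have hd : (d : ℕ∞) = ddist G s t := ENat.coe_toNat hdt
  have hPsol' : d + 2*k ≤ pathLen P := by
    rw [← hd] at hPsol
    exact_mod_cast hPsol
  have hLP : pathLen P = P.length - 1 := rfl
  by_contra hcon
  push_neg at hcon
  have hpre : (d : ℕ∞) + (k : ℕ∞) ≤ (pathLen (S ++ D) : ℕ∞) := by
    have h8 : d + k ≤ pathLen (S ++ D) := by rw [hQlen]; omega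
    exact_mod_cast h8
  have h6 := hgap _ hQpath (by rw [← hd]; exact hpre)
  have h7 := hmin _ hQpath h6
  rw [hQlen] at h7
  omega
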